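/- Let n ≥ 2 and k ≥ 1 be integers, and let f : ℝ^n → ℝ be an infinitely differentiable function such that f(x) = (1 − ‖x‖)^{k+1} for all x with 1/2 ≤ ‖x‖ ≤ 3/2. Then for each i ∈ {1,…,n} there exists a function g_i, infinitely differentiable on the open annulus A = {x ∈ ℝ^n : 1/2 < ‖x‖ < 3/2}, such that for all x ∈ A: ∂^k f/∂x_i^k(x) = (1−‖x‖)·(−1)^k·(k+1)!·x_i^k/‖x‖^k + (1−‖x‖)²·g_i(x). -/

import Mathlib

open Function Real Filter

noncomputable section AuxKDeriv

variable {n : ℕ}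

/-- The partial-derivative operator in direction `i`, defined via the 1-D `deriv`. -/
def Dop (i : Fin n) (u : EuclideanSpace ℝ (Fin n) → ℝ) (x : EuclideanSpace ℝ (Fin n)) : ℝ :=
  deriv (fun t => u (WithLp.toLp 2 (Function.update x i t))) (x i)

lemma deriv_curve (i : Fin n) (u : EuclideanSpace ℝ (Fin n) → ℝ)
    (x : EuclideanSpace ℝ (Fin n)) (t : ℝ) :
    deriv (fun s => u (WithLp.toLp 2 (Function.update x i s))) t = Dop i u (WithLp.toLp 2 (Function.update x i t)) := by
  simp [Dop, Function.update_idem]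

lemma iteratedDeriv_curve (i : Fin n) (m : ℕ) (u : EuclideanSpace ℝ (Fin n) → ℝ)
    (x : EuclideanSpace ℝ (Fin n)) (t : ℝ) :
    iteratedDeriv m (fun s => u (WithLp.toLp 2 (Function.update x i s))) t
      = (Dop i)^[m] u (WithLp.toLp 2 (Function.update x i t)) := by
  induction m generalizing u with
  | zero => simp
  | succ m ih =>
      rw [iteratedDeriv_succ']
      have h : deriv (fun s => u (WithLp.toLp 2 (Function.update x i s)))
          = fun s => Dop i u (WithLp.toLp 2 (Function.update x i s)) := funext (deriv_curve i u x)
      rw [h, ih (Dop i u), Function.iterate_succ_apply]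

lemma update_eq_add (i : Fin n) (x : EuclideanSpace ℝ (Fin n)) (t : ℝ) :
    WithLp.toLp 2 (Function.update x i t) = x + (t - x i) • EuclideanSpace.single i (1:ℝ) := by
  ext j
  rcases eq_or_ne j i with rfl | hji
  · simp [PiLp.add_apply, PiLp.smul_apply, EuclideanSpace.single_apply]
  · simp [Function.update_apply, hji, PiLp.add_apply, PiLp.smul_apply,
      EuclideanSpace.single_apply, Ne.symm hji]

lemma continuous_updateCurve (i : Fin n) (x : EuclideanSpace ℝ (Fin n)) :
    Continuous (fun t : ℝ => WithLp.toLp 2 (Function.update x i t)) := by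
  have : (fun t : ℝ => WithLp.toLp 2 (Function.update x i t))
      = fun t : ℝ => x + (t - x i) • EuclideanSpace.single i (1:ℝ) :=
    funext (update_eq_add i x)
  rw [this]
  fun_prop

lemma hasDerivAt_curve (i : Fin n) (u : EuclideanSpace ℝ (Fin n) → ℝ)
    (x : EuclideanSpace ℝ (Fin n)) (hu : DifferentiableAt ℝ u x) :
    HasDerivAt (fun t => u (WithLp.toLp 2 (Function.update x i t)))
      (fderiv ℝ u x (EuclideanSpace.single i (1:ℝ))) (x i) := by
  have h1 : HasDerivAt (fun t : ℝ => t - x i) 1 (x i) := (hasDerivAt_id _).sub_const _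
  have hc : HasDerivAt (fun t : ℝ => x + (t - x i) • EuclideanSpace.single i (1:ℝ))
      (EuclideanSpace.single i (1:ℝ)) (x i) := by
    simpa using (h1.smul_const (EuclideanSpace.single i (1:ℝ))).const_add x
  have hu' : HasFDerivAt u (fderiv ℝ u x)
      ((fun t : ℝ => x + (t - x i) • EuclideanSpace.single i (1:ℝ)) (x i)) := by
    simpa using hu.hasFDerivAt
  have key := hu'.comp_hasDerivAt (x i) hc
  have heq : (fun t : ℝ => u (WithLp.toLp 2 (Function.update x i t)))
      = u ∘ fun t : ℝ => x + (t - x i) • EuclideanSpace.single i (1:ℝ) := by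
    funext t; simp [update_eq_add i x t, Function.comp]
  rw [heq]
  exact key

lemma Dop_eq_fderiv (i : Fin n) (u : EuclideanSpace ℝ (Fin n) → ℝ)
    (x : EuclideanSpace ℝ (Fin n)) (hu : DifferentiableAt ℝ u x) :
    Dop i u x = fderiv ℝ u x (EuclideanSpace.single i (1:ℝ)) :=
  (hasDerivAt_curve i u x hu).deriv

lemma Dop_congr (i : Fin n) {u v : EuclideanSpace ℝ (Fin n) → ℝ}
    {A : Set (EuclideanSpace ℝ (Fin n))} (hA : IsOpen A)
    (huv : ∀ y ∈ A, u y = v y) {x : EuclideanSpace ℝ (Fin n)} (hx : x ∈ A) :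
    Dop i u x = Dop i v x := by
  apply Filter.EventuallyEq.deriv_eq
  have hmem : ∀ᶠ t in nhds (x i), WithLp.toLp 2 (Function.update x i t) ∈ A := by
    have hcont := (continuous_updateCurve i x).continuousAt (x := x i)
    have : WithLp.toLp 2 (Function.update x i (x i)) = x := by simp
    exact hcont.eventually_mem (by rw [this]; exact hA.mem_nhds hx)
  exact hmem.mono fun t ht => huv _ ht

/-- Derivative of `t ↦ ‖update x i t‖` at `x i`. -/
lemma hasDerivAt_norm_curve (i : Fin n) (x : EuclideanSpace ℝ (Fin n)) (hx : x ≠ 0) :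
    HasDerivAt (fun t : ℝ => @norm (EuclideanSpace ℝ (Fin n)) _ (WithLp.toLp 2 (Function.update x i t))) (x i / ‖x‖) (x i) := by
  set c : ℝ := ∑ j ∈ Finset.univ \ {i}, (x j) ^ 2 with hc
  have hnorm : ∀ t : ℝ, @norm (EuclideanSpace ℝ (Fin n)) _ (WithLp.toLp 2 (Function.update x i t)) = Real.sqrt (t ^ 2 + c) := by
    intro t
    rw [EuclideanSpace.norm_eq]
    congr 1
    have h1 : ∀ j, ‖WithLp.toLp 2 (Function.update x i t) j‖ ^ 2
        = Function.update (fun j => ‖x j‖ ^ 2) i (t ^ 2) j := by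
      intro j
      rcases eq_or_ne j i with rfl | hji
      · simp [Real.norm_eq_abs, sq_abs]
      · simp [Function.update_apply, hji]
    rw [Finset.sum_congr rfl fun j _ => h1 j,
      Finset.sum_update_of_mem (Finset.mem_univ i)]
    simp only [Real.norm_eq_abs, sq_abs, hc]
  have hx2 : Real.sqrt ((x i) ^ 2 + c) = ‖x‖ := by
    rw [← hnorm (x i), Function.update_eq_self]
  have hxne : ‖x‖ ≠ 0 := norm_ne_zero_iff.mpr hx
  have hne : (x i) ^ 2 + c ≠ 0 := by
    intro h
    rw [h, Real.sqrt_zero] at hx2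
    exact hxne hx2.symm
  have hsq : HasDerivAt (fun t : ℝ => t ^ 2 + c) (2 * x i) (x i) := by
    simpa using (hasDerivAt_pow 2 (x i)).add_const c
  have hs := (Real.hasDerivAt_sqrt hne).comp (x i) hsq
  have heq : (fun t : ℝ => @norm (EuclideanSpace ℝ (Fin n)) _ (WithLp.toLp 2 (Function.update x i t)))
      = Real.sqrt ∘ fun t : ℝ => t ^ 2 + c := funext fun t => hnorm t
  rw [heq]
  refine hs.congr_deriv ?_
  rw [hx2]
  field_simp

end AuxKDeriv

theorem kth_partial_derivative_expansion_on_annulus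
    (n k : ℕ) (hn : 2 ≤ n) (hk : 1 ≤ k)
    (f : EuclideanSpace ℝ (Fin n) → ℝ) (hf : ContDiff ℝ (⊤ : ℕ∞) f)
    (ha : ∀ x : EuclideanSpace ℝ (Fin n), 1 / 2 ≤ ‖x‖ → ‖x‖ ≤ 3 / 2 →
      f x = (1 - ‖x‖) ^ (k + 1)) :
    ∀ i : Fin n, ∃ g : EuclideanSpace ℝ (Fin n) → ℝ,
      ContDiffOn ℝ (⊤ : ℕ∞) g {x : EuclideanSpace ℝ (Fin n) | 1 / 2 < ‖x‖ ∧ ‖x‖ < 3 / 2} ∧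
      ∀ x : EuclideanSpace ℝ (Fin n), 1 / 2 < ‖x‖ → ‖x‖ < 3 / 2 →
        iteratedDeriv k (fun t : ℝ => f (WithLp.toLp 2 (Function.update x i t))) (x i) =
          (1 - ‖x‖) * ((-1 : ℝ) ^ k * (Nat.factorial (k + 1) : ℝ) * (x i) ^ k / ‖x‖ ^ k)
            + (1 - ‖x‖) ^ 2 * g x := by
  intro i
  set A : Set (EuclideanSpace ℝ (Fin n)) :=
    {x : EuclideanSpace ℝ (Fin n) | 1 / 2 < ‖x‖ ∧ ‖x‖ < 3 / 2} with hAdef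
  have hAopen : IsOpen A := by
    have : A = (fun x : EuclideanSpace ℝ (Fin n) => ‖x‖) ⁻¹' (Set.Ioo (1/2) (3/2)) := rfl
    rw [this]
    exact (isOpen_Ioo).preimage continuous_norm
  have hne0 : ∀ x ∈ A, x ≠ (0 : EuclideanSpace ℝ (Fin n)) := by
    intro x hx h0
    rw [h0] at hx
    simp [hAdef] at hx
    norm_num at hx
  have hnormne : ∀ x ∈ A, ‖x‖ ≠ 0 := fun x hx => norm_ne_zero_iff.mpr (hne0 x hx)
  -- basic smooth functions on A
  set h : EuclideanSpace ℝ (Fin n) → ℝ := fun y => 1 - ‖y‖ with hhdef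
  set p : EuclideanSpace ℝ (Fin n) → ℝ := fun y => -(y i) / ‖y‖ with hpdef
  have hnorm_smooth : ContDiffOn ℝ (⊤ : ℕ∞) (fun y : EuclideanSpace ℝ (Fin n) => ‖y‖) A := fun x hx =>
    (contDiffAt_norm ℝ (hne0 x hx)).contDiffWithinAt
  have hhs : ContDiffOn ℝ (⊤ : ℕ∞) h A := contDiffOn_const.sub hnorm_smooth
  have hproj : ContDiff ℝ (⊤ : ℕ∞) (fun y : EuclideanSpace ℝ (Fin n) => y i) := (EuclideanSpace.proj (𝕜 := ℝ) i).contDiff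
  have hps : ContDiffOn ℝ (⊤ : ℕ∞) p A :=
    (hproj.contDiffOn.neg).div hnorm_smooth (fun x hx => hnormne x hx)
  -- generic: fderiv in direction e of a smooth-on-A function is smooth on A
  have Lsmooth : ∀ v : EuclideanSpace ℝ (Fin n) → ℝ, ContDiffOn ℝ (⊤ : ℕ∞) v A →
      ContDiffOn ℝ (⊤ : ℕ∞) (fun y => fderiv ℝ v y (EuclideanSpace.single i (1:ℝ))) A := by
    intro v hv
    exact (hv.fderiv_of_isOpen hAopen (by exact_mod_cast le_top)).clm_apply contDiffOn_const
  have hdiffAt : ∀ (v : EuclideanSpace ℝ (Fin n) → ℝ), ContDiffOn ℝ (⊤ : ℕ∞) v A → ∀ x ∈ A,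
      DifferentiableAt ℝ v x := by
    intro v hv x hx
    exact ((hv x hx).contDiffAt (hAopen.mem_nhds hx)).differentiableAt (by simp)
  -- derivative of h along the curve
  have Hh : ∀ x ∈ A, HasDerivAt (fun t : ℝ => h (WithLp.toLp 2 (Function.update x i t))) (p x) (x i) := by
    intro x hx
    have := (hasDerivAt_norm_curve i x (hne0 x hx)).const_sub 1
    simpa [hhdef, hpdef, neg_div] using this
  -- main induction
  have main : ∀ m : ℕ, m ≤ k → ∃ G : EuclideanSpace ℝ (Fin n) → ℝ, ContDiffOn ℝ (⊤ : ℕ∞) G A ∧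
      ∀ x ∈ A, (Dop i)^[m] f x
        = ((k+1).descFactorial m : ℝ) * h x ^ (k + 1 - m) * p x ^ m
          + h x ^ (k + 2 - m) * G x := by
    intro m
    induction m with
    | zero =>
        intro _
        refine ⟨0, contDiffOn_const, fun x hx => ?_⟩
        have hx1 : (1:ℝ)/2 ≤ ‖x‖ := le_of_lt hx.1
        have hx2 : ‖x‖ ≤ 3/2 := le_of_lt hx.2
        simp [ha x hx1 hx2, hhdef]
    | succ m ih =>
        intro hm1
        obtain ⟨G, hGs, hGe⟩ := ih (Nat.le_of_succ_le hm1)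
        set a : ℕ := k - m with hadef
        have ha1 : k + 1 - m = a + 1 := by omega
        have ha2 : k + 2 - m = a + 2 := by omega
        have ha3 : k + 1 - (m + 1) = a := by omega
        have ha4 : k + 2 - (m + 1) = a + 1 := by omega
        set C : ℝ := ((k+1).descFactorial m : ℝ) with hCdef
        set q : EuclideanSpace ℝ (Fin n) → ℝ := fun y => fderiv ℝ p y (EuclideanSpace.single i (1:ℝ)) with hqdef
        set LG : EuclideanSpace ℝ (Fin n) → ℝ := fun y => fderiv ℝ G y (EuclideanSpace.single i (1:ℝ)) with hLGdef
        have hqs : ContDiffOn ℝ (⊤ : ℕ∞) q A := Lsmooth p hps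
        have hLGs : ContDiffOn ℝ (⊤ : ℕ∞) LG A := Lsmooth G hGs
        refine ⟨fun y => C * (m : ℝ) * p y ^ (m - 1) * q y
          + ((a : ℝ) + 2) * p y * G y + h y * LG y, ?_, ?_⟩
        · exact ((((contDiffOn_const.mul contDiffOn_const).mul (hps.pow _)).mul hqs).add
            ((contDiffOn_const.mul hps).mul hGs)).add (hhs.mul hLGs)
        · intro x hx
          set F : EuclideanSpace ℝ (Fin n) → ℝ := fun y => C * h y ^ (a+1) * p y ^ m + h y ^ (a+2) * G y with hFdef
          have hstep : (Dop i)^[m+1] f x = Dop i F x := by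
            rw [Function.iterate_succ_apply']
            refine Dop_congr i hAopen (fun y hy => ?_) hx
            rw [hGe y hy, ha1, ha2]
          -- derivative of F along the curve at x
          have Hp : HasDerivAt (fun t : ℝ => p (WithLp.toLp 2 (Function.update x i t))) (q x) (x i) :=
            hasDerivAt_curve i p x (hdiffAt p hps x hx)
          have HG : HasDerivAt (fun t : ℝ => G (WithLp.toLp 2 (Function.update x i t))) (LG x) (x i) :=
            hasDerivAt_curve i G x (hdiffAt G hGs x hx)
          have Hhx := Hh x hx
          have HF : HasDerivAt (fun t : ℝ => F (WithLp.toLp 2 (Function.update x i t)))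
              ((C * (((a:ℝ)+1) * h x ^ a * p x)) * p x ^ m
                + (C * h x ^ (a+1)) * ((m:ℝ) * p x ^ (m-1) * q x)
                + ((((a:ℝ)+2) * h x ^ (a+1) * p x) * G x
                  + h x ^ (a+2) * LG x)) (x i) := by
            have h1 : HasDerivAt (fun t : ℝ => C * h (WithLp.toLp 2 (Function.update x i t)) ^ (a+1))
                (C * (((a:ℝ)+1) * h x ^ a * p x)) (x i) := by
              have := (Hhx.pow (a+1)).const_mul C
              simpa [Function.update_eq_self] using this
            have h2 : HasDerivAt (fun t : ℝ => p (WithLp.toLp 2 (Function.update x i t)) ^ m)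
                ((m:ℝ) * p x ^ (m-1) * q x) (x i) := by
              have := Hp.fun_pow m
              simpa [Function.update_eq_self] using this
            have h3 : HasDerivAt (fun t : ℝ => h (WithLp.toLp 2 (Function.update x i t)) ^ (a+2))
                (((a:ℝ)+2) * h x ^ (a+1) * p x) (x i) := by
              have := Hhx.fun_pow (a+2)
              simpa [Function.update_eq_self] using this
            have h4 := (h1.fun_mul h2).fun_add (h3.fun_mul (HG))
            simpa [Function.update_eq_self, hFdef, mul_comm, mul_assoc, mul_left_comm]
              using h4
          have hDF : Dop i F x
              = (C * (((a:ℝ)+1) * h x ^ a * p x)) * p x ^ m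
                + (C * h x ^ (a+1)) * ((m:ℝ) * p x ^ (m-1) * q x)
                + ((((a:ℝ)+2) * h x ^ (a+1) * p x) * G x + h x ^ (a+2) * LG x) := HF.deriv
          rw [hstep, hDF, ha3, ha4]
          have hdesc : ((k+1).descFactorial (m+1) : ℝ) = ((a:ℝ)+1) * C := by
            rw [hCdef, Nat.descFactorial_succ]
            push_cast [hadef]
            have : (↑(k + 1 - m) : ℝ) = (↑(k - m) : ℝ) + 1 := by
              push_cast [Nat.cast_sub (Nat.le_of_succ_le hm1),
                Nat.cast_sub (by omega : m ≤ k + 1)]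
              ring
            rw [this]
          rw [hdesc]
          ring
  obtain ⟨G, hGs, hGe⟩ := main k le_rfl
  refine ⟨G, hGs, fun x hx1 hx2 => ?_⟩
  have hxA : x ∈ A := ⟨hx1, hx2⟩
  have hiter := iteratedDeriv_curve i k f x (x i)
  rw [Function.update_eq_self, WithLp.toLp_ofLp] at hiter
  rw [hiter, hGe x hxA]
  have hdnat : (k+1).descFactorial k = (k+1).factorial := by
    have h2 : (k+1).descFactorial (k+1) = (k + 1 - k) * (k+1).descFactorial k :=
      Nat.descFactorial_succ (k+1) k
    rw [Nat.descFactorial_self, show k + 1 - k = 1 by omega, one_mul] at h2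
    omega
  have hd : ((k+1).descFactorial k : ℝ) = ((k+1).factorial : ℝ) := by exact_mod_cast hdnat
  have hp : p x ^ k = (-1:ℝ)^k * (x i)^k / ‖x‖^k := by
    simp only [hpdef]
    rw [neg_div, neg_pow, div_pow]
    ring
  have hk1 : k + 1 - k = 1 := by omega
  have hk2 : k + 2 - k = 2 := by omega
  rw [hd, hp, hk1, hk2]
  simp only [hhdef]
  ring
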